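/- Let γ > 0 and c > 0. There is a constant C = C(c,γ) such that for all A > 0 and all B ≥ A, ∫₀^∞ |1/√s − 𝟙_{{s>A}}/√(s−A)| · (1/√s) · e^{−c(B/s)^γ} ds ≤ C. In particular the bound is uniform in A and B. -/

import Mathlib

open Set MeasureTheory

private lemma exp_neg_le_inv {x : ℝ} (hx : 0 < x) : Real.exp (-x) ≤ x⁻¹ := by
  rw [Real.exp_neg]
  exact inv_anti₀ hx (by linarith [Real.add_one_le_exp x])

/-- Pointwise bound on `(0, A]`. -/
private lemma bound1 {γ c A B s : ℝ} (hγ : 0 < γ) (hc : 0 < c) (hA : 0 < A)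
    (hAB : A ≤ B) (hs : 0 < s) (hsA : s ≤ A) :
    (1 / Real.sqrt s) * (1 / Real.sqrt s) * Real.exp (-c * (B / s) ^ γ)
      ≤ c⁻¹ * A ^ (-γ) * s ^ (γ - 1) := by
  have hB : 0 < B := lt_of_lt_of_le hA hAB
  have hBs : 0 < B / s := div_pos hB hs
  have hx : 0 < c * (B / s) ^ γ := mul_pos hc (Real.rpow_pos_of_pos hBs γ)
  have h1 : (1 / Real.sqrt s) * (1 / Real.sqrt s) = s⁻¹ := by
    rw [div_mul_div_comm, one_mul, Real.mul_self_sqrt hs.le, one_div]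
  rw [h1, neg_mul]
  calc s⁻¹ * Real.exp (-(c * (B / s) ^ γ)) ≤ s⁻¹ * (c * (B / s) ^ γ)⁻¹ := by
        exact mul_le_mul_of_nonneg_left (exp_neg_le_inv hx) (inv_nonneg.2 hs.le)
    _ = c⁻¹ * B ^ (-γ) * s ^ (γ - 1) := by
        have hsne : s ≠ 0 := hs.ne'
        have hsγ : s ^ γ ≠ 0 := (Real.rpow_pos_of_pos hs γ).ne'
        have hBγ : B ^ γ ≠ 0 := (Real.rpow_pos_of_pos hB γ).ne'
        rw [mul_inv, Real.div_rpow hB.le hs.le, Real.rpow_neg hB.le,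
          Real.rpow_sub hs, Real.rpow_one]
        field_simp
    _ ≤ c⁻¹ * A ^ (-γ) * s ^ (γ - 1) := by
        have hBA : B ^ (-γ) ≤ A ^ (-γ) :=
          Real.rpow_le_rpow_of_nonpos hA hAB (neg_nonpos.2 hγ.le)
        gcongr

/-- Pointwise bound on `(A, 2A]`. -/
private lemma bound2 {A s : ℝ} (hA : 0 < A) (hs : A < s) (hs2 : s ≤ 2 * A) :
    |1 / Real.sqrt s - 1 / Real.sqrt (s - A)| * (1 / Real.sqrt s)
      ≤ A ^ (-(1/2) : ℝ) * (s - A) ^ (-(1/2) : ℝ) := by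
  have hsA : 0 < s - A := by linarith
  have h0s : 0 < s := hA.trans hs
  have hu : 0 < Real.sqrt (s - A) := Real.sqrt_pos.2 hsA
  have hv : 0 < Real.sqrt s := Real.sqrt_pos.2 h0s
  have hA' : 0 < Real.sqrt A := Real.sqrt_pos.2 hA
  have huv : Real.sqrt (s - A) ≤ Real.sqrt s := Real.sqrt_le_sqrt (by linarith)
  have h1 : 1 / Real.sqrt s ≤ 1 / Real.sqrt (s - A) :=
    one_div_le_one_div_of_le hu huv
  have habs : |1 / Real.sqrt s - 1 / Real.sqrt (s - A)| ≤ 1 / Real.sqrt (s - A) := by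
    rw [abs_of_nonpos (by linarith)]
    have : 0 < 1 / Real.sqrt s := by positivity
    linarith
  have h2 : 1 / Real.sqrt s ≤ 1 / Real.sqrt A :=
    one_div_le_one_div_of_le hA' (Real.sqrt_le_sqrt hs.le)
  have hrw : A ^ (-(1/2) : ℝ) * (s - A) ^ (-(1/2) : ℝ)
      = (1 / Real.sqrt (s - A)) * (1 / Real.sqrt A) := by
    rw [Real.rpow_neg hA.le, Real.rpow_neg hsA.le, ← Real.sqrt_eq_rpow,
      ← Real.sqrt_eq_rpow, one_div, one_div]
    ring
  rw [hrw]
  exact mul_le_mul habs h2 (by positivity) (by positivity)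

/-- Pointwise bound on `(2A, ∞)`. -/
private lemma bound3 {A s : ℝ} (hA : 0 < A) (hs : 2 * A < s) :
    |1 / Real.sqrt s - 1 / Real.sqrt (s - A)| * (1 / Real.sqrt s)
      ≤ Real.sqrt 2 * A * s ^ (-2 : ℝ) := by
  have hsA : 0 < s - A := by linarith
  have h0s : 0 < s := by linarith
  set u := Real.sqrt (s - A) with hu_def
  set v := Real.sqrt s with hv_def
  have hu : 0 < u := Real.sqrt_pos.2 hsA
  have hv : 0 < v := Real.sqrt_pos.2 h0s
  have hvv : v * v = s := Real.mul_self_sqrt h0s.le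
  have huu : u * u = s - A := Real.mul_self_sqrt hsA.le
  -- u ≤ v
  have huv' : u ≤ v := Real.sqrt_le_sqrt (by linarith)
  -- u*v ≥ s - A
  have hprod : s - A ≤ u * v := by nlinarith
  -- v ≤ √2 * u
  have h2u : v ≤ Real.sqrt 2 * u := by
    have h1 : Real.sqrt (s / 2) ≤ u := Real.sqrt_le_sqrt (by linarith)
    have h2 : v = Real.sqrt 2 * Real.sqrt (s / 2) := by
      rw [← Real.sqrt_mul (by norm_num : (0:ℝ) ≤ 2)]
      rw [hv_def]; congr 1; ring
    rw [h2]
    exact mul_le_mul_of_nonneg_left h1 (Real.sqrt_nonneg 2)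
  have habs : |1 / v - 1 / u| = 1 / u - 1 / v := by
    rw [abs_of_nonpos]
    · ring
    · have := one_div_le_one_div_of_le hu huv'
      linarith
  have hrpow : s ^ (-2 : ℝ) = (s ^ 2)⁻¹ := by
    rw [show (-2 : ℝ) = -(2:ℕ) by norm_num, Real.rpow_neg h0s.le, Real.rpow_natCast]
  rw [habs, hrpow]
  have hstep : 1 / u - 1 / v ≤ A / (s * u) := by
    rw [div_sub_div _ _ hu.ne' hv.ne', div_le_div_iff₀ (by positivity) (by positivity)]
    nlinarith
  calc (1 / u - 1 / v) * (1 / v) ≤ (A / (s * u)) * (1 / v) := by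
        apply mul_le_mul_of_nonneg_right hstep (by positivity)
    _ = A / (s * u * v) := by field_simp
    _ ≤ Real.sqrt 2 * A * (s ^ 2)⁻¹ := by
        rw [div_le_iff₀ (by positivity)]
        have hs2 : Real.sqrt 2 * (u * v) * s ≥ v * v * s := by
          have h := mul_le_mul_of_nonneg_right
            (mul_le_mul_of_nonneg_right h2u hv.le) h0s.le
          nlinarith [h]
        have : Real.sqrt 2 * A * (s ^ 2)⁻¹ * (s * u * v)
            = A * (Real.sqrt 2 * (u * v) * s) * (s^2)⁻¹ := by ring
        rw [this]
        calc A = A * (v * v * s) * (s^2)⁻¹ := by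
              have hsne : s ≠ 0 := h0s.ne'
              rw [hvv]
              field_simp
          _ ≤ A * (Real.sqrt 2 * (u * v) * s) * (s^2)⁻¹ := by
              apply mul_le_mul_of_nonneg_right _ (by positivity)
              exact mul_le_mul_of_nonneg_left hs2 hA.le

/-- Uniform bound for the Riesz transform kernel integral:
`∫₀^∞ |1/√s − 𝟙_{s>A}/√(s−A)| (1/√s) e^{−c(B/s)^γ} ds ≤ C` uniformly in `0 < A ≤ B`. -/
theorem riesz_kernel_integral_bound
    (γ c : ℝ) (hγ : 0 < γ) (hc : 0 < c) :
    ∃ C : ℝ, 0 < C ∧ ∀ A B : ℝ, 0 < A → A ≤ B →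
      (∫ s in Ioi (0 : ℝ),
          |1 / Real.sqrt s - (if A < s then 1 / Real.sqrt (s - A) else 0)| *
            (1 / Real.sqrt s) * Real.exp (-c * (B / s) ^ γ))
        ≤ C := by
  refine ⟨1 / (c * γ) + 3, by positivity, ?_⟩
  intro A B hA hAB
  set f : ℝ → ℝ := fun s =>
    |1 / Real.sqrt s - (if A < s then 1 / Real.sqrt (s - A) else 0)| *
      (1 / Real.sqrt s) * Real.exp (-c * (B / s) ^ γ) with hf_def
  set g1 : ℝ → ℝ := fun s => c⁻¹ * A ^ (-γ) * s ^ (γ - 1) with hg1_def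
  set g2 : ℝ → ℝ := fun s => A ^ (-(1/2) : ℝ) * (s - A) ^ (-(1/2) : ℝ) with hg2_def
  set g3 : ℝ → ℝ := fun s => Real.sqrt 2 * A * s ^ (-2 : ℝ) with hg3_def
  set g : ℝ → ℝ := fun s => (Ioc 0 A).indicator g1 s + (Ioc A (2*A)).indicator g2 s
    + (Ioi (2*A)).indicator g3 s with hg_def
  -- Integrability of the pieces
  have hint1 : IntegrableOn g1 (Ioc 0 A) := by
    have := (intervalIntegral.intervalIntegrable_rpow' (a := 0) (b := A)
      (by linarith : (-1:ℝ) < γ - 1)).1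
    exact this.const_mul _
  have hint2 : IntegrableOn g2 (Ioc A (2*A)) := by
    have h := ((intervalIntegral.intervalIntegrable_rpow' (a := 0) (b := A)
      (by norm_num : (-1:ℝ) < -(1/2))).comp_sub_right A).1
    rw [zero_add] at h
    have h2A : 2 * A = A + A := by ring
    rw [h2A]
    exact h.const_mul _
  have hint3 : IntegrableOn g3 (Ioi (2*A)) := by
    have := integrableOn_Ioi_rpow_of_lt (by norm_num : (-2:ℝ) < -1)
      (by linarith : (0:ℝ) < 2*A)
    exact this.const_mul _
  have hgi1 : Integrable ((Ioc 0 A).indicator g1) (volume.restrict (Ioi (0:ℝ))) :=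
    (hint1.integrable_indicator measurableSet_Ioc).restrict
  have hgi2 : Integrable ((Ioc A (2*A)).indicator g2) (volume.restrict (Ioi (0:ℝ))) :=
    (hint2.integrable_indicator measurableSet_Ioc).restrict
  have hgi3 : Integrable ((Ioi (2*A)).indicator g3) (volume.restrict (Ioi (0:ℝ))) :=
    (hint3.integrable_indicator measurableSet_Ioi).restrict
  have hgi : Integrable g (volume.restrict (Ioi (0:ℝ))) := (hgi1.add hgi2).add hgi3
  -- Pointwise bound f ≤ g on Ioi 0
  have hfg : ∀ s ∈ Ioi (0:ℝ), f s ≤ g s := by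
    intro s hs
    simp only [mem_Ioi] at hs
    have hg2nn : ∀ t, 0 ≤ (Ioc A (2*A)).indicator g2 t := by
      intro t
      apply indicator_nonneg
      intro x hx
      have : (0:ℝ) < x - A := by simp only [mem_Ioc] at hx; linarith
      positivity
    have hg1nn : ∀ t, 0 ≤ (Ioc 0 A).indicator g1 t := by
      intro t
      apply indicator_nonneg
      intro x hx
      simp only [mem_Ioc] at hx
      have : (0:ℝ) < x := hx.1
      positivity
    have hg3nn : ∀ t, 0 ≤ (Ioi (2*A)).indicator g3 t := by
      intro t
      apply indicator_nonneg
      intro x hx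
      simp only [mem_Ioi] at hx
      have : (0:ℝ) < x := by linarith
      positivity
    rcases le_or_gt s A with hsA | hsA
    · -- s ∈ (0, A]
      have hif : ¬ A < s := not_lt.2 hsA
      have hfs : f s = (1 / Real.sqrt s) * (1 / Real.sqrt s) * Real.exp (-c * (B/s)^γ) := by
        simp only [hf_def, if_neg hif, sub_zero,
          abs_of_nonneg (by positivity : (0:ℝ) ≤ 1 / Real.sqrt s)]
      have hmem : s ∈ Ioc 0 A := ⟨hs, hsA⟩
      have : f s ≤ (Ioc 0 A).indicator g1 s := by
        rw [hfs, indicator_of_mem hmem]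
        exact bound1 hγ hc hA hAB hs hsA
      calc f s ≤ (Ioc 0 A).indicator g1 s := this
        _ ≤ g s := by
            simp only [hg_def]
            have := hg2nn s; have := hg3nn s; linarith
    · rcases le_or_gt s (2*A) with hs2 | hs2
      · -- s ∈ (A, 2A]
        have hfs : f s ≤ |1 / Real.sqrt s - 1 / Real.sqrt (s - A)| * (1 / Real.sqrt s) := by
          simp only [hf_def, if_pos hsA]
          calc |1 / Real.sqrt s - 1 / Real.sqrt (s - A)| * (1 / Real.sqrt s) *
                Real.exp (-c * (B/s)^γ)
              ≤ |1 / Real.sqrt s - 1 / Real.sqrt (s - A)| * (1 / Real.sqrt s) * 1 := by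
                apply mul_le_mul_of_nonneg_left _ (by positivity)
                rw [Real.exp_le_one_iff]
                have hB : 0 < B := lt_of_lt_of_le hA hAB
                have : (0:ℝ) < (B/s)^γ := Real.rpow_pos_of_pos (div_pos hB hs) γ
                nlinarith
            _ = _ := mul_one _
        have hmem : s ∈ Ioc A (2*A) := ⟨hsA, hs2⟩
        calc f s ≤ (Ioc A (2*A)).indicator g2 s := by
              rw [indicator_of_mem hmem]
              exact hfs.trans (bound2 hA hsA hs2)
          _ ≤ g s := by
              simp only [hg_def]
              have := hg1nn s; have := hg3nn s; linarith
      · -- s ∈ (2A, ∞)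
        have hfs : f s ≤ |1 / Real.sqrt s - 1 / Real.sqrt (s - A)| * (1 / Real.sqrt s) := by
          simp only [hf_def, if_pos hsA]
          calc |1 / Real.sqrt s - 1 / Real.sqrt (s - A)| * (1 / Real.sqrt s) *
                Real.exp (-c * (B/s)^γ)
              ≤ |1 / Real.sqrt s - 1 / Real.sqrt (s - A)| * (1 / Real.sqrt s) * 1 := by
                apply mul_le_mul_of_nonneg_left _ (by positivity)
                rw [Real.exp_le_one_iff]
                have hB : 0 < B := lt_of_lt_of_le hA hAB
                have : (0:ℝ) < (B/s)^γ := Real.rpow_pos_of_pos (div_pos hB hs) γ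
                nlinarith
            _ = _ := mul_one _
        have hmem : s ∈ Ioi (2*A) := hs2
        calc f s ≤ (Ioi (2*A)).indicator g3 s := by
              rw [indicator_of_mem hmem]
              exact hfs.trans (bound3 hA hs2)
          _ ≤ g s := by
              simp only [hg_def]
              have := hg1nn s; have := hg2nn s; linarith
  -- integral of f ≤ integral of g
  have hmain : (∫ s in Ioi (0:ℝ), f s) ≤ ∫ s in Ioi (0:ℝ), g s := by
    apply integral_mono_of_nonneg
    · filter_upwards with s
      simp only [hf_def, Pi.zero_apply]
      positivity
    · exact hgi
    · exact (ae_restrict_iff' measurableSet_Ioi).mpr (Filter.Eventually.of_forall hfg)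
  -- compute integral of g
  have hIg : (∫ s in Ioi (0:ℝ), g s) ≤ 1 / (c * γ) + 3 := by
    have hsplit : (∫ s in Ioi (0:ℝ), g s)
        = (∫ s in Ioi (0:ℝ), (Ioc 0 A).indicator g1 s)
          + (∫ s in Ioi (0:ℝ), (Ioc A (2*A)).indicator g2 s)
          + (∫ s in Ioi (0:ℝ), (Ioi (2*A)).indicator g3 s) := by
      rw [show g = ((Ioc 0 A).indicator g1 + (Ioc A (2*A)).indicator g2)
          + (Ioi (2*A)).indicator g3 from rfl]
      rw [integral_add' (hgi1.add hgi2) hgi3, integral_add' hgi1 hgi2]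
    have hI1 : (∫ s in Ioi (0:ℝ), (Ioc 0 A).indicator g1 s) = (c * γ)⁻¹ := by
      rw [setIntegral_indicator measurableSet_Ioc,
        inter_eq_self_of_subset_right Ioc_subset_Ioi_self]
      have : (∫ s in Ioc (0:ℝ) A, g1 s)
          = c⁻¹ * A ^ (-γ) * ∫ s in Ioc (0:ℝ) A, s ^ (γ - 1) := by
        simp only [hg1_def]
        rw [← integral_const_mul]
      rw [this, ← intervalIntegral.integral_of_le hA.le,
        integral_rpow (Or.inl (by linarith : (-1:ℝ) < γ - 1))]
      rw [sub_add_cancel, Real.zero_rpow hγ.ne', sub_zero]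
      rw [Real.rpow_neg hA.le]
      have hApos : (0:ℝ) < A ^ γ := Real.rpow_pos_of_pos hA γ
      field_simp
    have hI2 : (∫ s in Ioi (0:ℝ), (Ioc A (2*A)).indicator g2 s) = 2 := by
      have hsub : Ioc A (2*A) ⊆ Ioi (0:ℝ) := fun x hx => lt_trans hA hx.1
      rw [setIntegral_indicator measurableSet_Ioc,
        inter_eq_self_of_subset_right hsub]
      have : (∫ s in Ioc A (2*A), g2 s)
          = A ^ (-(1/2):ℝ) * ∫ s in Ioc A (2*A), (s - A) ^ (-(1/2):ℝ) := by
        simp only [hg2_def]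
        rw [← integral_const_mul]
      rw [this, ← intervalIntegral.integral_of_le (by linarith : A ≤ 2*A)]
      have hcs : (∫ s in A..(2*A), (s - A) ^ (-(1/2):ℝ))
          = ∫ s in (A - A)..(2*A - A), s ^ (-(1/2):ℝ) :=
        intervalIntegral.integral_comp_sub_right (fun u => u ^ (-(1/2):ℝ)) A
      rw [hcs, show A - A = (0:ℝ) by ring, show 2*A - A = A by ring,
        integral_rpow (Or.inl (by norm_num : (-1:ℝ) < -(1/2)))]
      rw [show -(1/2) + 1 = (1/2 : ℝ) by norm_num,
        Real.zero_rpow (by norm_num : (1/2:ℝ) ≠ 0), sub_zero]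
      have hsplit2 : A ^ (-(1/2):ℝ) * (A ^ ((1/2):ℝ) / (1/2))
          = (A ^ (-(1/2):ℝ) * A ^ ((1/2):ℝ)) * 2 := by ring
      rw [hsplit2, ← Real.rpow_add hA]
      norm_num
    have hI3 : (∫ s in Ioi (0:ℝ), (Ioi (2*A)).indicator g3 s) = Real.sqrt 2 / 2 := by
      have hsub : Ioi (2*A) ⊆ Ioi (0:ℝ) := fun x hx => by
        simp only [mem_Ioi] at hx ⊢; linarith
      rw [setIntegral_indicator measurableSet_Ioi,
        inter_eq_self_of_subset_right hsub]
      have : (∫ s in Ioi (2*A), g3 s)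
          = Real.sqrt 2 * A * ∫ s in Ioi (2*A), s ^ (-2:ℝ) := by
        simp only [hg3_def]
        rw [← integral_const_mul]
      rw [this, integral_Ioi_rpow_of_lt (by norm_num : (-2:ℝ) < -1)
        (by linarith : (0:ℝ) < 2*A)]
      rw [show (-2:ℝ) + 1 = -1 by norm_num, Real.rpow_neg_one]
      field_simp
    rw [hsplit, hI1, hI2, hI3]
    have h2 : Real.sqrt 2 ≤ 2 := by
      nlinarith [Real.sq_sqrt (by norm_num : (0:ℝ) ≤ 2), Real.sqrt_nonneg 2]
    have : (c*γ)⁻¹ = 1/(c*γ) := by rw [one_div]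
    rw [this]
    linarith
  exact hmain.trans hIg
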